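/- Fix constants τ, β with 0 < τ < β. There exist constants c₁, c₂, η > 0 (depending only on τ and β) and a function 𝓛 : ℝ³ × ℂ³ → ℝ with the following properties: (a) for every ξ ∈ ℝ³ and every state (a, b, c) ∈ ℂ³, c₁ E₁(ξ; a, b, c) ≤ 𝓛(ξ, (a, b, c)) ≤ c₂ E₁(ξ; a, b, c), where E₁(ξ; a, b, c) = ½(|b + τc|² + τ(β − τ)|ξ|²|b|² + |ξ|²|a + τb|²); (b) for every ξ ∈ ℝ³ and every differentiable solution (û, v̂, ŵ) : [0, ∞) → ℂ³ of the Fourier-mode linearized JMGT system, the function t ↦ 𝓛(ξ, (û(t), v̂(t), ŵ(t))) is differentiable and satisfies d/dt 𝓛(ξ, (û(t), v̂(t), ŵ(t))) + η · (|ξ|²/(1 + |ξ|²)) · 𝓛(ξ, (û(t), v̂(t), ŵ(t))) ≤ 0 for all t ≥ 0. -/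

import Mathlib

set_option maxHeartbeats 1600000

open Complex

/-- Real inner product of two complex numbers, `Re (z * conj w)`. -/
noncomputable def jmgtRC (z w : ℂ) : ℝ := (z * (starRingEnd ℂ) w).re

lemma jmgtRC_def (z w : ℂ) : jmgtRC z w = z.re * w.re + z.im * w.im := by
  simp [jmgtRC, Complex.mul_re]

lemma jmgtRC_self (z : ℂ) : jmgtRC z z = ‖z‖ ^ 2 := by
  rw [jmgtRC_def, Complex.sq_norm, Complex.normSq_apply]

lemma jmgtRC_self_nonneg (z : ℂ) : 0 ≤ jmgtRC z z := by
  rw [jmgtRC_def]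
  nlinarith [mul_self_nonneg z.re, mul_self_nonneg z.im]

lemma jmgt_eps_facts (τ δ ε : ℝ) (hτ : 0 < τ) (hδ : 0 < δ)
    (hεD : ε * (2*(2*τ*δ + (4*τ+δ)^2 + 9)) = δ) :
    0 < ε ∧ 2*ε ≤ δ ∧ ε ≤ 1/6 ∧ ε*τ ≤ 1/20 := by
  have hτδ : 0 < τ*δ := mul_pos hτ hδ
  have hM2 : (0:ℝ) ≤ (4*τ+δ)^2 := sq_nonneg _
  have hD0 : (0:ℝ) < 2*(2*τ*δ + (4*τ+δ)^2 + 9) := by nlinarith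
  have hε0 : 0 < ε := by nlinarith
  have hετ2 : 0 ≤ ε*τ^2 := mul_nonneg hε0.le (sq_nonneg τ)
  have hεδ2 : 0 ≤ ε*δ^2 := mul_nonneg hε0.le (sq_nonneg δ)
  have hετδ : 0 ≤ ε*(τ*δ) := mul_nonneg hε0.le hτδ.le
  have h18 : 18*ε ≤ δ := by nlinarith [hεD, hετ2, hεδ2, hετδ]
  have h2d : 2*ε*δ^2 ≤ δ := by nlinarith [hεD, hετ2, hετδ, hε0.le]
  have h20 : 20*(ε*τ)*δ ≤ δ := by nlinarith [hεD, hετ2, hεδ2, hε0.le]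
  have hεδ1 : 2*ε*δ ≤ 1 := by nlinarith [h2d, hδ]
  have hεa : ε ≤ 1/6 := by nlinarith [h18, hεδ1, hε0]
  have hετ20 : ε*τ ≤ 1/20 := by nlinarith [h20, hδ]
  exact ⟨hε0, by linarith, hεa, hετ20⟩

lemma jmgtRC_sq_le (z w : ℂ) : jmgtRC z w ^ 2 ≤ jmgtRC z z * jmgtRC w w := by
  simp only [jmgtRC_def]
  nlinarith [sq_nonneg (z.re * w.im - z.im * w.re)]

lemma hasDerivAt_complexRe {f : ℝ → ℂ} {f' : ℂ} {t : ℝ} (hf : HasDerivAt f f' t) :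
    HasDerivAt (fun s => (f s).re) f'.re t := by
  exact (Complex.reCLM.hasFDerivAt.comp_hasDerivAt t hf)

lemma hasDerivAt_complexIm {f : ℝ → ℂ} {f' : ℂ} {t : ℝ} (hf : HasDerivAt f f' t) :
    HasDerivAt (fun s => (f s).im) f'.im t := by
  exact (Complex.imCLM.hasFDerivAt.comp_hasDerivAt t hf)

lemma jmgtRC_hasDerivAt {f g : ℝ → ℂ} {f' g' : ℂ} {t : ℝ}
    (hf : HasDerivAt f f' t) (hg : HasDerivAt g g' t) :
    HasDerivAt (fun s => jmgtRC (f s) (g s)) (jmgtRC f' (g t) + jmgtRC (f t) g') t := by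
  have h := ((hasDerivAt_complexRe hf).mul (hasDerivAt_complexRe hg)).add
    ((hasDerivAt_complexIm hf).mul (hasDerivAt_complexIm hg))
  simp only [jmgtRC_def]
  exact h.congr_deriv (by ring)

/-- The Lyapunov functional. -/
noncomputable def jmgtL (τ δ ε k : ℝ) (a b c : ℂ) : ℝ :=
  (1/2) * (jmgtRC (b + (τ:ℂ)*c) (b + (τ:ℂ)*c) + τ*δ*k*(jmgtRC b b)
      + k*(jmgtRC (a + (τ:ℂ)*b) (a + (τ:ℂ)*b)))
    + ε*(k/(1+k))*(jmgtRC (a + (τ:ℂ)*b) (b + (τ:ℂ)*c) - 2*τ*(jmgtRC b (b + (τ:ℂ)*c)))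

/-- From `x² ≤ y²` and `0 ≤ y` deduce `-y ≤ x ≤ y`. -/
lemma jmgt_abs_le {x y : ℝ} (h : x^2 ≤ y^2) (hy : 0 ≤ y) : -y ≤ x ∧ x ≤ y := by
  constructor <;> nlinarith [h, hy]

/-- Equivalence of the Lyapunov functional with the energy (abstract real inequality). -/
lemma jmgt_equiv (τ δ ε k ρ A Bb Cc P Q : ℝ) (hτ : 0 < τ) (hδ : 0 < δ)
    (hεD : ε * (2*(2*τ*δ + (4*τ+δ)^2 + 9)) = δ)
    (hk : 0 ≤ k) (hρ0 : 0 ≤ ρ) (hρsq : ρ^2 ≤ k/4)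
    (hA : 0 ≤ A) (hB : 0 ≤ Bb) (hC : 0 ≤ Cc)
    (hP : P^2 ≤ Cc*A) (hQ : Q^2 ≤ Bb*A) :
    (1/2) * ((1/2)*(A + τ*δ*k*Bb + k*Cc))
      ≤ (1/2)*(A + τ*δ*k*Bb + k*Cc) + ε*ρ*(P - 2*τ*Q) ∧
    (1/2)*(A + τ*δ*k*Bb + k*Cc) + ε*ρ*(P - 2*τ*Q)
      ≤ (3/2) * ((1/2)*(A + τ*δ*k*Bb + k*Cc)) := by
  obtain ⟨hε0, hε2, hεa, hετ20⟩ := jmgt_eps_facts τ δ ε hτ hδ hεD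
  have hc3 : ε*(1+2*τ) ≤ 1 := by linarith [hεa, hετ20]
  have hε1 : ε ≤ 1 := by linarith
  have hk4 : (0:ℝ) ≤ k/4 := by linarith
  -- bounds on ρP, ρQ
  have hAC : 0 ≤ A + k*Cc := by linarith [mul_nonneg hk hC]
  have h4P : (4*(ρ*P))^2 ≤ (A + k*Cc)^2 := by
    have s1 : ρ^2*(P^2) ≤ k/4*(P^2) := mul_le_mul_of_nonneg_right hρsq (sq_nonneg P)
    have s2 : k/4*(P^2) ≤ k/4*(Cc*A) := mul_le_mul_of_nonneg_left hP hk4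
    linarith only [s1, s2, sq_nonneg (A - k*Cc)]
  obtain ⟨hPa, hPb⟩ := jmgt_abs_le h4P hAC
  have hAB : 0 ≤ A + k*Bb := by linarith [mul_nonneg hk hB]
  have h4Q : (4*(ρ*Q))^2 ≤ (A + k*Bb)^2 := by
    have s1 : ρ^2*(Q^2) ≤ k/4*(Q^2) := mul_le_mul_of_nonneg_right hρsq (sq_nonneg Q)
    have s2 : k/4*(Q^2) ≤ k/4*(Bb*A) := mul_le_mul_of_nonneg_left hQ hk4
    linarith only [s1, s2, sq_nonneg (A - k*Bb)]
  obtain ⟨hQa, hQb⟩ := jmgt_abs_le h4Q hAB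
  -- scaled versions
  have hε4 : (0:ℝ) ≤ ε/4 := by linarith
  have hετ : (0:ℝ) ≤ ε*τ/2 := by linarith only [mul_pos hε0 hτ]
  have q1 : ε*ρ*P ≤ ε/4*(A + k*Cc) := by
    have := mul_le_mul_of_nonneg_left hPb hε4; linarith only [this]
  have q2 : -(ε/4*(A + k*Cc)) ≤ ε*ρ*P := by
    have := mul_le_mul_of_nonneg_left hPa hε4; linarith only [this]
  have q3 : ε*ρ*(2*τ*Q) ≤ ε*τ/2*(A + k*Bb) := by
    have := mul_le_mul_of_nonneg_left hQb hετ; linarith only [this]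
  have q4 : -(ε*τ/2*(A + k*Bb)) ≤ ε*ρ*(2*τ*Q) := by
    have := mul_le_mul_of_nonneg_left hQa hετ; linarith only [this]
  -- coefficient products
  have p1 : 0 ≤ (1 - ε*(1+2*τ))*A := mul_nonneg (by linarith) hA
  have p2 : 0 ≤ (1 - ε)*(k*Cc) := mul_nonneg (by linarith) (mul_nonneg hk hC)
  have p3 : 0 ≤ (δ - 2*ε)*(τ*(k*Bb)) :=
    mul_nonneg (by linarith) (mul_nonneg hτ.le (mul_nonneg hk hB))
  constructor
  · linarith only [q2, q3, p1, p2, p3]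
  · linarith only [q1, q4, p1, p2, p3]

/-- Decay inequality (abstract real inequality). -/
lemma jmgt_decay (τ δ ε η k ρ A Bb Cc P Q R : ℝ) (hτ : 0 < τ) (hδ : 0 < δ)
    (hεD : ε * (2*(2*τ*δ + (4*τ+δ)^2 + 9)) = δ)
    (hηE : η * (2*(1+τ*δ+ε*τ)) = ε)
    (hk : 0 ≤ k) (hρ0 : 0 ≤ ρ) (hρ1 : ρ ≤ 1) (hρk : ρ ≤ k)
    (hA : 0 ≤ A) (hB : 0 ≤ Bb) (hC : 0 ≤ Cc)
    (hP : P^2 ≤ Cc*A) (hQ : Q^2 ≤ Bb*A) (hR : R^2 ≤ Cc*Bb) :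
    (-(δ*k*Bb) + ε*ρ*(-A - k*Cc + (2*τ-δ)*k*R + 2*Q + 2*τ*δ*k*Bb))
      + η*ρ*((1/2)*(A + τ*δ*k*Bb + k*Cc) + ε*ρ*(P - 2*τ*Q)) ≤ 0 := by
  have hτδ : 0 < τ*δ := mul_pos hτ hδ
  have hM2 : (0:ℝ) ≤ (4*τ+δ)^2 := sq_nonneg _
  obtain ⟨hε0, hε2, hεa, hετ20⟩ := jmgt_eps_facts τ δ ε hτ hδ hεD
  have hB0 : (0:ℝ) < 2*(1+τ*δ+ε*τ) := by linarith only [mul_pos hε0 hτ, hτδ]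
  have hη0 : 0 < η := by nlinarith only [hηE, hB0, hε0]
  have hεhalf : ε ≤ 1/2 := by linarith
  -- coefficient inequalities
  have hη1 : 0 ≤ η*(τ*δ) := mul_nonneg hη0.le hτδ.le
  have hη2 : 0 ≤ η*(ε*τ) := mul_nonneg hη0.le (mul_nonneg hε0.le hτ.le)
  have hη3 : 0 ≤ η*(1-ε) := mul_nonneg hη0.le (by linarith)
  have ci1 : -δ + ε*((4*τ+δ)^2) + 8*ε + 2*ε*τ*δ + η*(τ*δ)/2 + η*(ε*τ) ≤ 0 := by
    linarith only [hεD, hηE, hη1, hη2, hη3, hη0.le, hε0.le, hδ.le]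
  have ci2 : -ε + ε/8 + η/2 + η*ε/2 + η*(ε*τ) ≤ 0 := by
    linarith only [hηE, hη1, hη2, hη3, hη0.le, hε0.le]
  have ci3 : -ε + ε/4 + η/2 + η*ε/2 ≤ 0 := by
    linarith only [hηE, hη1, hη2, hη3, hη0.le, hε0.le]
  -- basis nonnegativity
  have hXn : 0 ≤ ρ*A := mul_nonneg hρ0 hA
  have hYn : 0 ≤ k*Bb := mul_nonneg hk hB
  have hZn : 0 ≤ ρ*(k*Cc) := mul_nonneg hρ0 (mul_nonneg hk hC)
  -- bound for the R term
  have eR2 : 0 ≤ Cc/4 + (4*τ+δ)^2*Bb :=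
    add_nonneg (by linarith) (mul_nonneg hM2 hB)
  have eR1 : ((2*τ-δ)*R)^2 ≤ (Cc/4 + (4*τ+δ)^2*Bb)^2 := by
    have s1 : (2*τ-δ)^2*(R^2) ≤ (2*τ-δ)^2*(Cc*Bb) :=
      mul_le_mul_of_nonneg_left hR (sq_nonneg _)
    have s0 : (2*τ-δ)^2 ≤ (4*τ+δ)^2 := by nlinarith only [mul_pos hτ hδ, mul_pos hτ hτ]
    have s2 : (2*τ-δ)^2*(Cc*Bb) ≤ (4*τ+δ)^2*(Cc*Bb) :=
      mul_le_mul_of_nonneg_right s0 (mul_nonneg hC hB)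
    linarith only [s1, s2, sq_nonneg (Cc/4 - (4*τ+δ)^2*Bb)]
  have hR1 : (2*τ-δ)*R ≤ Cc/4 + (4*τ+δ)^2*Bb := (jmgt_abs_le eR1 eR2).2
  have hR2 : ε*ρ*((2*τ-δ)*k*R) ≤ ε/4*(ρ*(k*Cc)) + ε*((4*τ+δ)^2)*(k*Bb) := by
    have h3 : (0:ℝ) ≤ ε*ρ*k := mul_nonneg (mul_nonneg hε0.le hρ0) hk
    have h4 := mul_le_mul_of_nonneg_left hR1 h3
    have h5 : (0:ℝ) ≤ (1-ρ)*(ε*((4*τ+δ)^2*(k*Bb))) :=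
      mul_nonneg (by linarith) (mul_nonneg hε0.le (mul_nonneg hM2 hYn))
    linarith only [h4, h5]
  -- bound for the Q term
  have eQ2 : 0 ≤ A/8 + 8*Bb := by linarith
  have eQ1 : (2*Q)^2 ≤ (A/8 + 8*Bb)^2 := by
    linarith only [hQ, sq_nonneg (A/8 - 8*Bb)]
  have hQ1 : 2*Q ≤ A/8 + 8*Bb := (jmgt_abs_le eQ1 eQ2).2
  have hQ2 : ε*ρ*(2*Q) ≤ ε/8*(ρ*A) + 8*ε*(k*Bb) := by
    have h3 : (0:ℝ) ≤ ε*ρ := mul_nonneg hε0.le hρ0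
    have h4 := mul_le_mul_of_nonneg_left hQ1 h3
    have h5 : (0:ℝ) ≤ (k-ρ)*(8*(ε*Bb)) :=
      mul_nonneg (by linarith) (mul_nonneg (by norm_num) (mul_nonneg hε0.le hB))
    linarith only [h4, h5]
  -- bound for the Bb term of the corrector
  have hB2 : ε*ρ*(2*τ*δ*k*Bb) ≤ 2*ε*τ*δ*(k*Bb) := by
    have h5 : (0:ℝ) ≤ (1-ρ)*(2*(ε*(τ*(δ*(k*Bb))))) :=
      mul_nonneg (by linarith) (mul_nonneg (by norm_num)
        (mul_nonneg hε0.le (mul_nonneg hτ.le (mul_nonneg hδ.le hYn))))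
    linarith only [h5]
  -- bound for the energy term
  have hE : η*ρ*((1/2)*(A + τ*δ*k*Bb + k*Cc))
      ≤ η/2*(ρ*A) + η*(τ*δ)/2*(k*Bb) + η/2*(ρ*(k*Cc)) := by
    have h5 : (0:ℝ) ≤ (1-ρ)*(η*(τ*(δ*(k*Bb)))) :=
      mul_nonneg (by linarith) (mul_nonneg hη0.le
        (mul_nonneg hτ.le (mul_nonneg hδ.le hYn)))
    linarith only [h5]
  -- bound for the P corrector term
  have e0 : ρ^2 ≤ ρ := by nlinarith only [hρ0, hρ1]
  have e0k : ρ^2 ≤ k := by linarith only [e0, hρk]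
  have eP2 : 0 ≤ ρ*A + ρ*(k*Cc) := add_nonneg hXn hZn
  have eP1 : (2*(ρ^2*P))^2 ≤ (ρ*A + ρ*(k*Cc))^2 := by
    have s1 : ρ^2*ρ^2*(P^2) ≤ ρ^2*ρ^2*(Cc*A) :=
      mul_le_mul_of_nonneg_left hP (mul_nonneg (sq_nonneg ρ) (sq_nonneg ρ))
    have s2 : ρ^2*ρ^2*(Cc*A) ≤ ρ^2*k*(Cc*A) :=
      mul_le_mul_of_nonneg_right
        (mul_le_mul_of_nonneg_left e0k (sq_nonneg ρ)) (mul_nonneg hC hA)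
    linarith only [s1, s2, sq_nonneg (ρ*A - ρ*(k*Cc))]
  have hP1 : 2*(ρ^2*P) ≤ ρ*A + ρ*(k*Cc) := (jmgt_abs_le eP1 eP2).2
  have hP2 : η*ρ*(ε*ρ*P) ≤ η*ε/2*(ρ*A) + η*ε/2*(ρ*(k*Cc)) := by
    have h3 : (0:ℝ) ≤ η*ε/2 := by linarith only [mul_pos hη0 hε0]
    have h4 := mul_le_mul_of_nonneg_left hP1 h3
    linarith only [h4]
  -- bound for the Q corrector term
  have eQ4 : 0 ≤ ρ*A + k*Bb := add_nonneg hXn hYn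
  have eQ3 : (2*(ρ^2*Q))^2 ≤ (ρ*A + k*Bb)^2 := by
    have s1 : ρ^2*ρ^2*(Q^2) ≤ ρ^2*ρ^2*(Bb*A) :=
      mul_le_mul_of_nonneg_left hQ (mul_nonneg (sq_nonneg ρ) (sq_nonneg ρ))
    have s2 : ρ^2*ρ^2*(Bb*A) ≤ ρ^2*k*(Bb*A) :=
      mul_le_mul_of_nonneg_right
        (mul_le_mul_of_nonneg_left e0k (sq_nonneg ρ)) (mul_nonneg hB hA)
    have s3 : ρ^2*k*(Bb*A) ≤ ρ*k*(Bb*A) :=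
      mul_le_mul_of_nonneg_right
        (mul_le_mul_of_nonneg_right e0 hk) (mul_nonneg hB hA)
    linarith only [s1, s2, s3, sq_nonneg (ρ*A - k*Bb)]
  have hQc : -(ρ*A + k*Bb) ≤ 2*(ρ^2*Q) := (jmgt_abs_le eQ3 eQ4).1
  have hQ3 : η*ρ*(ε*ρ*(-(2*τ*Q))) ≤ η*(ε*τ)*(ρ*A) + η*(ε*τ)*(k*Bb) := by
    have h3 : (0:ℝ) ≤ η*(ε*τ) := by linarith only [mul_pos hη0 (mul_pos hε0 hτ)]
    have h4 := mul_le_mul_of_nonneg_left hQc h3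
    linarith only [h4]
  -- final coefficient products
  have hcY : (-δ + ε*((4*τ+δ)^2) + 8*ε + 2*ε*τ*δ + η*(τ*δ)/2 + η*(ε*τ))*(k*Bb) ≤ 0 := by
    have := mul_le_mul_of_nonneg_right ci1 hYn; linarith only [this]
  have hcX : (-ε + ε/8 + η/2 + η*ε/2 + η*(ε*τ))*(ρ*A) ≤ 0 := by
    have := mul_le_mul_of_nonneg_right ci2 hXn; linarith only [this]
  have hcZ : (-ε + ε/4 + η/2 + η*ε/2)*(ρ*(k*Cc)) ≤ 0 := by
    have := mul_le_mul_of_nonneg_right ci3 hZn; linarith only [this]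
  linarith only [hR2, hQ2, hB2, hE, hP2, hQ3, hcX, hcY, hcZ]

theorem jmgt_lyapunov_functional (τ β : ℝ) (hτ : 0 < τ) (hτβ : τ < β) :
    ∃ c₁ > (0 : ℝ), ∃ c₂ > (0 : ℝ), ∃ η > (0 : ℝ),
      ∃ L : EuclideanSpace ℝ (Fin 3) × (ℂ × ℂ × ℂ) → ℝ,
        (∀ (ξ : EuclideanSpace ℝ (Fin 3)) (a b c : ℂ),
            c₁ * ((1 / 2) * (‖b + (τ : ℂ) * c‖ ^ 2
                + τ * (β - τ) * ‖ξ‖ ^ 2 * ‖b‖ ^ 2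
                + ‖ξ‖ ^ 2 * ‖a + (τ : ℂ) * b‖ ^ 2))
              ≤ L (ξ, (a, b, c)) ∧
            L (ξ, (a, b, c)) ≤
              c₂ * ((1 / 2) * (‖b + (τ : ℂ) * c‖ ^ 2
                + τ * (β - τ) * ‖ξ‖ ^ 2 * ‖b‖ ^ 2
                + ‖ξ‖ ^ 2 * ‖a + (τ : ℂ) * b‖ ^ 2))) ∧
        (∀ (ξ : EuclideanSpace ℝ (Fin 3)) (u v w w' : ℝ → ℂ),
            (∀ t ≥ (0 : ℝ), HasDerivAt u (v t) t) →
            (∀ t ≥ (0 : ℝ), HasDerivAt v (w t) t) →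
            (∀ t ≥ (0 : ℝ), HasDerivAt w (w' t) t) →
            (∀ t ≥ (0 : ℝ), (τ : ℂ) * w' t =
              -((‖ξ‖ ^ 2 : ℝ) : ℂ) * u t - ((β * ‖ξ‖ ^ 2 : ℝ) : ℂ) * v t - w t) →
            ∃ g' : ℝ → ℝ, ∀ t ≥ (0 : ℝ),
              HasDerivAt (fun s => L (ξ, (u s, v s, w s))) (g' t) t ∧
              g' t + η * (‖ξ‖ ^ 2 / (1 + ‖ξ‖ ^ 2)) * L (ξ, (u t, v t, w t)) ≤ 0) := by
  set δ := β - τ with hδdef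
  have hδ0 : 0 < δ := by rw [hδdef]; linarith
  set ε := δ / (2*(2*τ*δ + (4*τ+δ)^2 + 9)) with hεdef
  have hD0 : (0:ℝ) < 2*(2*τ*δ + (4*τ+δ)^2 + 9) := by
    nlinarith [sq_nonneg (4*τ+δ), mul_pos hτ hδ0]
  have hε0 : 0 < ε := by rw [hεdef]; exact div_pos hδ0 hD0
  have hεD : ε * (2*(2*τ*δ + (4*τ+δ)^2 + 9)) = δ := by
    rw [hεdef]; exact div_mul_cancel₀ δ hD0.ne'
  set η := ε / (2*(1+τ*δ+ε*τ)) with hηdef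
  have hB0 : (0:ℝ) < 2*(1+τ*δ+ε*τ) := by
    nlinarith [mul_pos hτ hδ0, mul_pos hε0 hτ]
  have hη0 : 0 < η := by rw [hηdef]; exact div_pos hε0 hB0
  have hηE : η * (2*(1+τ*δ+ε*τ)) = ε := by
    rw [hηdef]; exact div_mul_cancel₀ ε hB0.ne'
  refine ⟨1/2, by norm_num, 3/2, by norm_num, η, hη0,
    fun p => jmgtL τ δ ε (‖p.1‖^2) p.2.1 p.2.2.1 p.2.2.2, ?_, ?_⟩
  · -- equivalence with the energy
    intro ξ a b c
    dsimp only
    simp only [← jmgtRC_self, jmgtL]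
    have hk0 : (0:ℝ) ≤ ‖ξ‖^2 := by positivity
    have h1k : (0:ℝ) < 1 + ‖ξ‖^2 := by linarith
    have hρ0 : (0:ℝ) ≤ ‖ξ‖^2/(1+‖ξ‖^2) := by positivity
    have hρsq : (‖ξ‖^2/(1+‖ξ‖^2))^2 ≤ ‖ξ‖^2/4 := by
      rw [div_pow, div_le_div_iff₀ (by positivity) (by norm_num)]
      nlinarith [mul_nonneg hk0 (sq_nonneg (1 - ‖ξ‖^2))]
    have key := jmgt_equiv τ δ ε (‖ξ‖^2) (‖ξ‖^2/(1+‖ξ‖^2))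
      (jmgtRC (b+(τ:ℂ)*c) (b+(τ:ℂ)*c)) (jmgtRC b b)
      (jmgtRC (a+(τ:ℂ)*b) (a+(τ:ℂ)*b)) (jmgtRC (a+(τ:ℂ)*b) (b+(τ:ℂ)*c))
      (jmgtRC b (b+(τ:ℂ)*c)) hτ hδ0 hεD hk0 hρ0 hρsq
      (jmgtRC_self_nonneg _) (jmgtRC_self_nonneg _) (jmgtRC_self_nonneg _)
      (jmgtRC_sq_le _ _) (jmgtRC_sq_le _ _)
    constructor
    · linarith [key.1]
    · linarith [key.2]
  · -- decay along solutions
    intro ξ u v w w' hu hv hw hode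
    set k := ‖ξ‖^2 with hk
    have hk0 : (0:ℝ) ≤ k := by rw [hk]; positivity
    have h1k : (0:ℝ) < 1 + k := by linarith
    set ρ := k/(1+k) with hρdef
    have hρ0 : (0:ℝ) ≤ ρ := by rw [hρdef]; positivity
    have hρ1 : ρ ≤ 1 := by rw [hρdef, div_le_one h1k]; linarith
    have hρk : ρ ≤ k := by rw [hρdef]; exact div_le_self hk0 (by linarith)
    refine ⟨fun t => -(δ*k*(jmgtRC (v t) (v t)))
      + ε*ρ*(-(jmgtRC (v t + (τ:ℂ)*w t) (v t + (τ:ℂ)*w t))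
         - k*(jmgtRC (u t + (τ:ℂ)*v t) (u t + (τ:ℂ)*v t))
         + (2*τ-δ)*k*(jmgtRC (u t + (τ:ℂ)*v t) (v t))
         + 2*(jmgtRC (v t) (v t + (τ:ℂ)*w t))
         + 2*τ*δ*k*(jmgtRC (v t) (v t))), fun t ht => ?_⟩
    have hut := hu t ht
    have hvt := hv t ht
    have hwt := hw t ht
    have hq : HasDerivAt (fun s => u s + (τ:ℂ)*v s) (v t + (τ:ℂ)*w t) t :=
      hut.add (hvt.const_mul _)
    have hF0 : HasDerivAt (fun s => v s + (τ:ℂ)*w s) (w t + (τ:ℂ)*w' t) t :=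
      hvt.add (hwt.const_mul _)
    have hFe : w t + (τ:ℂ)*w' t
        = -((k:ℝ):ℂ)*(u t + (τ:ℂ)*v t) - (((δ*k:ℝ)):ℂ)*(v t) := by
      rw [hode t ht, hδdef]
      push_cast
      ring
    have hF : HasDerivAt (fun s => v s + (τ:ℂ)*w s)
        (-((k:ℝ):ℂ)*(u t + (τ:ℂ)*v t) - (((δ*k:ℝ)):ℂ)*(v t)) t := hFe ▸ hF0
    have d1 := jmgtRC_hasDerivAt hF hF
    have d2 := jmgtRC_hasDerivAt hvt hvt
    have d3 := jmgtRC_hasDerivAt hq hq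
    have d4 := jmgtRC_hasDerivAt hq hF
    have d5 := jmgtRC_hasDerivAt hvt hF
    have big := (((d1.add (d2.const_mul (τ*δ*k))).add (d3.const_mul k)).const_mul
        (1/2:ℝ)).add ((d4.sub (d5.const_mul (2*τ))).const_mul (ε*ρ))
    constructor
    · -- the derivative
      have hval : ((1:ℝ)/2)*((jmgtRC (-((k:ℝ):ℂ)*(u t + (τ:ℂ)*v t) - (((δ*k:ℝ)):ℂ)*(v t))
              (v t + (τ:ℂ)*w t)
            + jmgtRC (v t + (τ:ℂ)*w t)
              (-((k:ℝ):ℂ)*(u t + (τ:ℂ)*v t) - (((δ*k:ℝ)):ℂ)*(v t)))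
          + τ*δ*k*(jmgtRC (w t) (v t) + jmgtRC (v t) (w t))
          + k*(jmgtRC (v t + (τ:ℂ)*w t) (u t + (τ:ℂ)*v t)
            + jmgtRC (u t + (τ:ℂ)*v t) (v t + (τ:ℂ)*w t)))
        + ε*ρ*((jmgtRC (v t + (τ:ℂ)*w t) (v t + (τ:ℂ)*w t)
            + jmgtRC (u t + (τ:ℂ)*v t)
              (-((k:ℝ):ℂ)*(u t + (τ:ℂ)*v t) - (((δ*k:ℝ)):ℂ)*(v t)))
          - 2*τ*(jmgtRC (w t) (v t + (τ:ℂ)*w t)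
            + jmgtRC (v t)
              (-((k:ℝ):ℂ)*(u t + (τ:ℂ)*v t) - (((δ*k:ℝ)):ℂ)*(v t))))
        = -(δ*k*(jmgtRC (v t) (v t)))
          + ε*ρ*(-(jmgtRC (v t + (τ:ℂ)*w t) (v t + (τ:ℂ)*w t))
             - k*(jmgtRC (u t + (τ:ℂ)*v t) (u t + (τ:ℂ)*v t))
             + (2*τ-δ)*k*(jmgtRC (u t + (τ:ℂ)*v t) (v t))
             + 2*(jmgtRC (v t) (v t + (τ:ℂ)*w t))
             + 2*τ*δ*k*(jmgtRC (v t) (v t))) := by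
        simp only [jmgtRC_def, Complex.add_re, Complex.add_im, Complex.mul_re,
          Complex.mul_im, Complex.sub_re, Complex.sub_im, Complex.neg_re,
          Complex.neg_im, Complex.ofReal_re, Complex.ofReal_im]
        ring
      have big2 : HasDerivAt (fun s => jmgtL τ δ ε k (u s) (v s) (w s))
          (-(δ*k*(jmgtRC (v t) (v t)))
            + ε*ρ*(-(jmgtRC (v t + (τ:ℂ)*w t) (v t + (τ:ℂ)*w t))
               - k*(jmgtRC (u t + (τ:ℂ)*v t) (u t + (τ:ℂ)*v t))
               + (2*τ-δ)*k*(jmgtRC (u t + (τ:ℂ)*v t) (v t))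
               + 2*(jmgtRC (v t) (v t + (τ:ℂ)*w t))
               + 2*τ*δ*k*(jmgtRC (v t) (v t)))) t := by
        rw [← hval]
        exact big
      exact big2
    · -- the inequality
      have key := jmgt_decay τ δ ε η k ρ
        (jmgtRC (v t + (τ:ℂ)*w t) (v t + (τ:ℂ)*w t))
        (jmgtRC (v t) (v t))
        (jmgtRC (u t + (τ:ℂ)*v t) (u t + (τ:ℂ)*v t))
        (jmgtRC (u t + (τ:ℂ)*v t) (v t + (τ:ℂ)*w t))
        (jmgtRC (v t) (v t + (τ:ℂ)*w t))
        (jmgtRC (u t + (τ:ℂ)*v t) (v t))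
        hτ hδ0 hεD hηE hk0 hρ0 hρ1 hρk
        (jmgtRC_self_nonneg _) (jmgtRC_self_nonneg _) (jmgtRC_self_nonneg _)
        (jmgtRC_sq_le _ _) (jmgtRC_sq_le _ _) (jmgtRC_sq_le _ _)
      dsimp only
      rw [← hk]
      simp only [jmgtL]
      rw [← hρdef]
      linarith [key]
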